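/- Let I and J be nonempty finite types and let M : I × J → ℝ be a joint probability distribution, i.e., M(i,j) ≥ 0 for all i, j and Σ_{i,j} M(i,j) = 1. Let p(i) = Σ_j M(i,j) and q(j) = Σ_i M(i,j) be its marginals. Then M(i,j) = p(i)·q(j) for all (i,j) ∈ I × J if and only if the rank of M, viewed as a matrix, is at most 1. Consequently, a correlated equilibrium of a finite two-player game (a joint distribution over action pairs) is a Nash equilibrium (a product of independent mixed strategies) if and only if its probability matrix has rank at most 1. -/

import Mathlib

theorem stmt19 {I J : Type*} [Fintype I] [Fintype J] [Nonempty I] [Nonempty J]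
    [DecidableEq I] [DecidableEq J]
    (M : Matrix I J ℝ)
    (hnonneg : ∀ i j, 0 ≤ M i j)
    (hsum : ∑ i, ∑ j, M i j = 1)
    (p : I → ℝ) (q : J → ℝ)
    (hp : ∀ i, p i = ∑ j, M i j)
    (hq : ∀ j, q j = ∑ i, M i j) :
    (∀ i j, M i j = p i * q j) ↔ M.rank ≤ 1 := by
  constructor
  · intro h
    have hpmem : p ∈ LinearMap.range M.mulVecLin := by
      refine ⟨fun _ => 1, ?_⟩
      ext i
      simp [Matrix.mulVecLin_apply, Matrix.mulVec, dotProduct, hp]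
    refine finrank_le_one (⟨p, hpmem⟩ : LinearMap.range M.mulVecLin) ?_
    rintro ⟨w, x, rfl⟩
    refine ⟨∑ j, q j * x j, ?_⟩
    ext i
    simp only [Submodule.coe_smul, SetLike.mk_smul_mk, Pi.smul_apply, smul_eq_mul,
      Matrix.mulVecLin_apply, Matrix.mulVec, dotProduct]
    rw [Finset.sum_mul]
    refine (Finset.sum_congr rfl fun j _ => ?_).symm
    rw [h i j]
    ring
  · intro h i j
    obtain ⟨v, hv⟩ := finrank_le_one_iff.mp
      (h : Module.finrank ℝ (LinearMap.range M.mulVecLin) ≤ 1)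
    choose c hc using fun j =>
      hv ⟨M.mulVecLin (Pi.single j 1), LinearMap.mem_range_self _ _⟩
    set u : I → ℝ := (v : I → ℝ) with hu
    have hcol : ∀ i j, M i j = c j * u i := by
      intro i j
      have := congrArg (fun w : LinearMap.range M.mulVecLin => (w : I → ℝ) i) (hc j)
      simp only [Submodule.coe_smul, Pi.smul_apply, smul_eq_mul,
        Matrix.mulVecLin_apply] at this
      simp only [Matrix.mulVec_single, mul_one, MulOpposite.op_one, one_smul, Matrix.col_apply] at this
      exact this.symm
    have hps : ∀ i, p i = (∑ j, c j) * u i := by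
      intro i
      rw [hp i]
      rw [Finset.sum_mul]
      exact Finset.sum_congr rfl fun j _ => hcol i j
    have hqs : ∀ j, q j = c j * ∑ i, u i := by
      intro j
      rw [hq j, Finset.mul_sum]
      exact Finset.sum_congr rfl fun i _ => hcol i j
    have hone : (∑ j, c j) * (∑ i, u i) = 1 := by
      rw [← hsum, Finset.sum_mul]
      rw [Finset.sum_comm (f := fun i j => M i j)]
      refine Finset.sum_congr rfl fun j _ => ?_
      rw [Finset.mul_sum]
      exact (Finset.sum_congr rfl fun i _ => (hcol i j).symm)
    rw [hps, hqs, hcol i j]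
    calc c j * u i = c j * u i * ((∑ j, c j) * (∑ i, u i)) := by rw [hone]; ring
      _ = (∑ j, c j) * u i * (c j * ∑ i, u i) := by ring
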